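/- arXiv:0803.2639 — 6 statements merged into one kernel-verified Lean document; each statement's English description precedes it below -/
import Mathlib

section
/- The Hurwitz-type ring 𝓗 = ρ𝒢 ⊕ ρξ𝒢 ⊕ j𝒢 ⊕ jξ𝒢, where ρ = (1+i+j+k)/2, ξ = e^{πi/4}, and 𝒢 = ℤ[i], is closed under multiplication, i.e. it is a subring of the quaternion algebra H = Q(ξ) ⊕ jQ(ξ). -/
open Quaternion Complex

/-- The embedding of `ℂ` into the Hamiltonian quaternions via the imaginary unit `i`. -/
noncomputable def toQ (z : ℂ) : Quaternion ℝ := ⟨z.re, z.im, 0, 0⟩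

/-- The quaternion unit `j`. -/
def jj : Quaternion ℝ := ⟨0, 0, 1, 0⟩

/-- `ξ = e^{πi/4}` as a quaternion. -/
noncomputable def xiQ : Quaternion ℝ := toQ (Complex.exp (Real.pi * Complex.I / 4))

/-- A Gaussian integer `a + bi` viewed as a quaternion. -/
def Gq (a b : ℤ) : Quaternion ℝ := ⟨(a : ℝ), (b : ℝ), 0, 0⟩

/-- `ρ = (1 + i + j + k)/2`. -/
noncomputable def rhoQ : Quaternion ℝ := ⟨1/2, 1/2, 1/2, 1/2⟩

/-- The Hurwitz-type ring `𝓗 = ρ𝒢 ⊕ ρξ𝒢 ⊕ j𝒢 ⊕ jξ𝒢`, as the right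
`ℤ[i]`-module generated by `{ρ, ρξ, j, jξ}`. -/
noncomputable def HurSet : Set (Quaternion ℝ) :=
  {q | ∃ a₁ b₁ a₂ b₂ a₃ b₃ a₄ b₄ : ℤ,
    q = rhoQ * Gq a₁ b₁ + rhoQ * xiQ * Gq a₂ b₂ + jj * Gq a₃ b₃ + jj * xiQ * Gq a₄ b₄}

noncomputable def s2 : ℝ := Real.sqrt 2

noncomputable def E (a1 b1 a2 b2 a3 b3 a4 b4 : ℤ) : Quaternion ℝ :=
  ⟨((a1:ℝ) - b1 - b2*s2)/2, ((a1:ℝ) + b1 + a2*s2)/2,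
   ((a1:ℝ) + b1 + a2*s2)/2 + a3 + ((a4:ℝ) - b4)*s2/2,
   ((a1:ℝ) - b1 - b2*s2)/2 - b3 - ((a4:ℝ) + b4)*s2/2⟩

lemma hxi : xiQ = ⟨s2/2, s2/2, 0, 0⟩ := by
  have h : (Real.pi : ℂ) * Complex.I / 4 = ((Real.pi/4 : ℝ) : ℂ) * Complex.I := by
    push_cast; ring
  unfold xiQ toQ s2
  rw [h]
  exact QuaternionAlgebra.ext
    (by rw [Complex.exp_ofReal_mul_I_re, Real.cos_pi_div_four])
    (by rw [Complex.exp_ofReal_mul_I_im, Real.sin_pi_div_four]) rfl rfl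

lemma hrepr (a1 b1 a2 b2 a3 b3 a4 b4 : ℤ) :
    rhoQ * Gq a1 b1 + rhoQ * xiQ * Gq a2 b2 + jj * Gq a3 b3 + jj * xiQ * Gq a4 b4
      = E a1 b1 a2 b2 a3 b3 a4 b4 := by
  rw [hxi]
  refine QuaternionAlgebra.ext ?_ ?_ ?_ ?_ <;>
    simp only [← hxi] <;> simp only [Quaternion.re_add, Quaternion.imI_add, Quaternion.imJ_add, Quaternion.imK_add, Quaternion.re_mul, Quaternion.imI_mul, Quaternion.imJ_mul, Quaternion.imK_mul] <;> simp [E, rhoQ, jj, Gq, hxi] <;> push_cast <;> ring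

lemma memE (a1 b1 a2 b2 a3 b3 a4 b4 : ℤ) : E a1 b1 a2 b2 a3 b3 a4 b4 ∈ HurSet :=
  ⟨a1, b1, a2, b2, a3, b3, a4, b4, (hrepr a1 b1 a2 b2 a3 b3 a4 b4).symm⟩

lemma hadd (a1 b1 a2 b2 a3 b3 a4 b4 c1 d1 c2 d2 c3 d3 c4 d4 : ℤ) :
    E a1 b1 a2 b2 a3 b3 a4 b4 + E c1 d1 c2 d2 c3 d3 c4 d4
      = E (a1+c1) (b1+d1) (a2+c2) (b2+d2) (a3+c3) (b3+d3) (a4+c4) (b4+d4) := by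
  refine QuaternionAlgebra.ext ?_ ?_ ?_ ?_ <;> (try simp only [Quaternion.re_add, Quaternion.imI_add, Quaternion.imJ_add, Quaternion.imK_add, Quaternion.re_neg, Quaternion.imI_neg, Quaternion.imJ_neg, Quaternion.imK_neg, Quaternion.re_mul, Quaternion.imI_mul, Quaternion.imJ_mul, Quaternion.imK_mul]) <;> simp [E] <;> push_cast <;> ring

lemma hneg (a1 b1 a2 b2 a3 b3 a4 b4 : ℤ) :
    -E a1 b1 a2 b2 a3 b3 a4 b4 = E (-a1) (-b1) (-a2) (-b2) (-a3) (-b3) (-a4) (-b4) := by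
  refine QuaternionAlgebra.ext ?_ ?_ ?_ ?_ <;> (try simp only [Quaternion.re_add, Quaternion.imI_add, Quaternion.imJ_add, Quaternion.imK_add, Quaternion.re_neg, Quaternion.imI_neg, Quaternion.imJ_neg, Quaternion.imK_neg, Quaternion.re_mul, Quaternion.imI_mul, Quaternion.imJ_mul, Quaternion.imK_mul]) <;> simp [E] <;> push_cast <;> ring

lemma hone : (1 : Quaternion ℝ) = E 1 (-1) 0 0 0 1 0 0 := by
  refine QuaternionAlgebra.ext ?_ ?_ ?_ ?_ <;> (try simp only [Quaternion.re_add, Quaternion.imI_add, Quaternion.imJ_add, Quaternion.imK_add, Quaternion.re_neg, Quaternion.imI_neg, Quaternion.imJ_neg, Quaternion.imK_neg, Quaternion.re_mul, Quaternion.imI_mul, Quaternion.imJ_mul, Quaternion.imK_mul]) <;> simp [E] <;> push_cast <;> ring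


lemma hzero : (0 : Quaternion ℝ) = E 0 0 0 0 0 0 0 0 := by
  refine QuaternionAlgebra.ext ?_ ?_ ?_ ?_ <;> simp [E]


set_option maxHeartbeats 1000000 in
lemma hmul (a1 b1 a2 b2 a3 b3 a4 b4 c1 d1 c2 d2 c3 d3 c4 d4 : ℤ) :
    E a1 b1 a2 b2 a3 b3 a4 b4 * E c1 d1 c2 d2 c3 d3 c4 d4
      = E ((-1)*a1*c3 + (-1)*a1*d1 + (1)*c1*b3 + (-1)*a2*c2 + (-1)*a2*c4 + (-1)*a2*d2 + (1)*c2*b4 + (-1)*a3*c3 + (-1)*a3*d1 + (-1)*a3*d3 + (1)*c3*b3 + (-1)*a4*c4 + (-1)*a4*d2 + (-1)*a4*d4 + (1)*c4*b4 + (-1)*b1*d1 + (-1)*b1*d3 + (-1)*b2*d4 + (-1)*b3*d3 + (-1)*b4*d4) ((1)*a1*c1 + (-1)*a1*d3 + (1)*c1*a3 + (1)*c1*b1 + (1)*a2*c2 + (-1)*a2*d2 + (-1)*a2*d4 + (1)*c2*a4 + (1)*a3*c3 + (-1)*a3*d3 + (1)*c3*b1 + (1)*c3*b3 + (1)*a4*c4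 + (-1)*a4*d4 + (1)*c4*b2 + (1)*c4*b4 + (1)*d1*b3 + (1)*d2*b4 + (1)*b3*d3 + (1)*b4*d4) ((-1)*a1*c4 + (-1)*a1*d2 + (1)*c1*a2 + (1)*c1*a4 + (-1)*a2*d1 + (-1)*a2*d3 + (1)*c2*b3 + (-1)*a3*c4 + (-1)*a3*d2 + (-1)*a3*d4 + (1)*c3*a4 + (1)*c3*b2 + (1)*c3*b4 + (-1)*a4*d3 + (1)*c4*b3 + (-1)*b1*d2 + (-1)*b1*d4 + (1)*d1*b4 + (-1)*b3*d4 + (1)*d3*b4) ((1)*a1*c2 + (-1)*a1*d4 + (1)*c1*a2 + (-1)*c1*b4 + (1)*a2*c3 + (1)*a2*d1 + (1)*c2*a3 + (1)*c2*b1 + (1)*a3*c4 + (-1)*a3*d4 + (1)*c3*a4 + (-1)*c3*b4 + (1)*a4*d1 + (1)*a4*d3 + (1)*c4*b1 + (1)*c4*b3 + (1)*b2*d3 + (1)*d2*b3 + (1)*b3*d4 + (1)*d3*b4) ((1)*a1*c3 + (1)*a1*d1 + (1)*a1*d3 + (-1)*c1*b1 + (-1)*c1*b3 + (1)*a2*c4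 + (1)*a2*d2 + (1)*a2*d4 + (-1)*c2*a4 + (-1)*c2*b2 + (-1)*c2*b4 + (1)*a3*d3 + (-1)*c3*b1 + (-1)*c3*b3 + (1)*a4*d4 + (-1)*c4*b2 + (-1)*c4*b4 + (1)*b1*d3 + (-1)*d1*b3 + (1)*b2*d4) ((-1)*a1*c1 + (-1)*a1*c3 + (1)*a1*d3 + (1)*c1*b3 + (-1)*a2*c2 + (-1)*a2*c4 + (1)*a2*d4 + (-1)*a3*c3 + (-1)*c3*b1 + (-1)*a4*c4 + (-1)*a4*d2 + (-1)*c4*b2 + (-1)*b1*d1 + (-1)*b1*d3 + (-1)*d1*b3 + (-1)*b2*d2 + (-1)*b2*d4 + (-1)*d2*b4 + (-1)*b3*d3 + (-1)*b4*d4) ((1)*a1*c4 + (1)*a1*d2 + (1)*a1*d4 + (-1)*c1*a2 + (-1)*a2*c3 + (1)*a2*d3 + (-1)*c2*b1 + (-1)*c2*b3 + (1)*a3*d4 + (-1)*c3*a4 + (-1)*c3*b2 + (-1)*a4*d1 + (-1)*c4*b1 + (-1)*c4*b3 + (1)*b1*d4 + (-1)*d1*b2 + (-1)*d1*b4 + (-1)*b2*d3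 + (-1)*d2*b3 + (-1)*d3*b4) ((-1)*a1*c2 + (-1)*a1*c4 + (1)*a1*d4 + (1)*c1*a4 + (1)*c1*b2 + (1)*c1*b4 + (-1)*a2*c3 + (-1)*a2*d1 + (-1)*a2*d3 + (1)*c2*b3 + (-1)*a3*c4 + (1)*c3*b2 + (1)*c3*b4 + (-1)*a4*d3 + (-1)*c4*b1 + (-1)*b1*d2 + (-1)*b1*d4 + (-1)*b2*d3 + (-1)*d2*b3 + (-1)*b3*d4) := by
  have h2 : s2 * s2 = 2 := Real.mul_self_sqrt (by norm_num)
  refine QuaternionAlgebra.ext ?_ ?_ ?_ ?_ <;>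
    simp only [Quaternion.re_mul, Quaternion.imI_mul, Quaternion.imJ_mul,
      Quaternion.imK_mul] <;> simp only [E] <;> push_cast
  · linear_combination ((-1/2)*(a2:ℝ)*(c2:ℝ) + (-1/4)*(a2:ℝ)*(c4:ℝ) + (1/4)*(a2:ℝ)*(d4:ℝ) + (-1/4)*(c2:ℝ)*(a4:ℝ) + (1/4)*(c2:ℝ)*(b4:ℝ) + (-1/2)*(a4:ℝ)*(c4:ℝ) + (-1/4)*(a4:ℝ)*(d2:ℝ) + (-1/4)*(c4:ℝ)*(b2:ℝ) + (-1/4)*(b2:ℝ)*(d4:ℝ) + (-1/4)*(d2:ℝ)*(b4:ℝ) + (-1/2)*(b4:ℝ)*(d4:ℝ)) * h2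
  · linear_combination ((-1/4)*(a2:ℝ)*(c4:ℝ) + (-1/2)*(a2:ℝ)*(d2:ℝ) + (-1/4)*(a2:ℝ)*(d4:ℝ) + (1/4)*(c2:ℝ)*(a4:ℝ) + (1/4)*(c2:ℝ)*(b4:ℝ) + (-1/4)*(a4:ℝ)*(d2:ℝ) + (-1/2)*(a4:ℝ)*(d4:ℝ) + (1/4)*(c4:ℝ)*(b2:ℝ) + (1/2)*(c4:ℝ)*(b4:ℝ) + (-1/4)*(b2:ℝ)*(d4:ℝ) + (1/4)*(d2:ℝ)*(b4:ℝ)) * h2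
  · linear_combination ((1/4)*(a2:ℝ)*(c4:ℝ) + (1/4)*(a2:ℝ)*(d4:ℝ) + (-1/4)*(c2:ℝ)*(a4:ℝ) + (-1/2)*(c2:ℝ)*(b2:ℝ) + (-1/4)*(c2:ℝ)*(b4:ℝ) + (-1/4)*(a4:ℝ)*(d2:ℝ) + (-1/4)*(c4:ℝ)*(b2:ℝ) + (1/4)*(b2:ℝ)*(d4:ℝ) + (1/4)*(d2:ℝ)*(b4:ℝ)) * h2
  · linear_combination ((1/4)*(a2:ℝ)*(c4:ℝ) + (-1/4)*(a2:ℝ)*(d4:ℝ) + (-1/4)*(c2:ℝ)*(a4:ℝ) + (1/4)*(c2:ℝ)*(b4:ℝ) + (1/4)*(a4:ℝ)*(d2:ℝ) + (1/4)*(c4:ℝ)*(b2:ℝ) + (1/2)*(b2:ℝ)*(d2:ℝ) + (1/4)*(b2:ℝ)*(d4:ℝ) + (1/4)*(d2:ℝ)*(b4:ℝ)) * h2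

/-- The Hurwitz-type ring `𝓗` is closed under multiplication: it forms a subring
of the quaternion algebra `H = ℚ(ξ) ⊕ jℚ(ξ)`. -/
theorem stmt2 : ∃ S : Subring (Quaternion ℝ), (S : Set (Quaternion ℝ)) = HurSet := by
  refine ⟨{ carrier := HurSet
            mul_mem' := ?_
            one_mem' := ?_
            add_mem' := ?_
            zero_mem' := ?_
            neg_mem' := ?_ }, rfl⟩
  · rintro x y ⟨a1, b1, a2, b2, a3, b3, a4, b4, rfl⟩ ⟨c1, d1, c2, d2, c3, d3, c4, d4, rfl⟩
    rw [hrepr, hrepr, hmul]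
    exact memE _ _ _ _ _ _ _ _
  · exact hone ▸ memE 1 (-1) 0 0 0 1 0 0
  · rintro x y ⟨a1, b1, a2, b2, a3, b3, a4, b4, rfl⟩ ⟨c1, d1, c2, d2, c3, d3, c4, d4, rfl⟩
    rw [hrepr, hrepr, hadd]
    exact memE _ _ _ _ _ _ _ _
  · exact hzero ▸ memE 0 0 0 0 0 0 0 0
  · rintro x ⟨a1, b1, a2, b2, a3, b3, a4, b4, rfl⟩
    rw [hrepr, hneg]
    exact memE _ _ _ _ _ _ _ _
end

section
/- Let M = M(c₁,c₂,c₃,c₄) be the 4×4 matrix with rows (c₁, ic₂, −c₃*, −c₄*), (c₂, c₁, ic₄*, −c₃*), (c₃, ic₄, c₁*, c₂*), (c₄, c₃, −ic₂*, c₁*), where c₁,…,c₄ ∈ ℤ[i] are not all zero. Then det(M M^H) is a positive integer, so in particular det(M M^H) ≥ 1. -/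
open Complex Matrix

/-- `z` is a Gaussian integer. -/
def IsGaussian (z : ℂ) : Prop := ∃ a b : ℤ, z = a + b * Complex.I

/-- The quaternionic representation matrix `M(c₁,c₂,c₃,c₄)`. -/
noncomputable def Mmat (c : Fin 4 → ℂ) : Matrix (Fin 4) (Fin 4) ℂ :=
  !![c 0, Complex.I * c 1, -(starRingEnd ℂ (c 2)), -(starRingEnd ℂ (c 3));
     c 1, c 0, Complex.I * starRingEnd ℂ (c 3), -(starRingEnd ℂ (c 2));
     c 2, Complex.I * c 3, starRingEnd ℂ (c 0), starRingEnd ℂ (c 1);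
     c 3, c 2, -(Complex.I * starRingEnd ℂ (c 1)), starRingEnd ℂ (c 0)]

set_option maxHeartbeats 2000000 in
/-- `M Mᴴ` is block diagonal with blocks `[[N, (1+i)s],[(1-i)s, N]]`. -/
theorem Mmat_mul_conjTranspose (a b : Fin 4 → ℤ) (N s : ℂ)
    (hN : N = ((a 0^2+b 0^2+a 1^2+b 1^2+a 2^2+b 2^2+a 3^2+b 3^2 : ℤ) : ℂ))
    (hs : s = ((a 0*a 1 + a 1*b 0 - a 0*b 1 + b 0*b 1 + a 2*a 3 + a 3*b 2 - a 2*b 3 + b 2*b 3 : ℤ) : ℂ)) :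
    Mmat (fun t => (a t : ℂ) + (b t : ℂ) * Complex.I) *
      (Mmat (fun t => (a t : ℂ) + (b t : ℂ) * Complex.I))ᴴ =
    !![N, (1+Complex.I)*s, 0, 0;
       (1-Complex.I)*s, N, 0, 0;
       0, 0, N, (1+Complex.I)*s;
       0, 0, (1-Complex.I)*s, N] := by
  have h3 : Complex.I^3 = -Complex.I := by
    rw [pow_succ, Complex.I_sq]; ring
  have h4 : Complex.I^4 = 1 := by
    rw [pow_succ, h3]; simp [Complex.I_mul_I]
  subst hN hs
  push_cast
  ext i j
  fin_cases i <;> fin_cases j <;>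
    simp [Mmat, Matrix.mul_apply, Fin.sum_univ_four, Complex.conj_I,
      Matrix.vecHead, Matrix.vecTail] <;>
    (try ring_nf) <;> (try simp only [Complex.I_sq, h3, h4]) <;> (try ring_nf)

/-- Determinant of the block matrix. -/
theorem detblock (N s : ℂ) :
    (!![N, (1+Complex.I)*s, 0, 0;
       (1-Complex.I)*s, N, 0, 0;
       0, 0, N, (1+Complex.I)*s;
       0, 0, (1-Complex.I)*s, N]).det = (N^2 - 2*s^2)^2 := by
  simp [Matrix.det_succ_row_zero, Fin.sum_univ_succ, Fin.succAbove]
  ring_nf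
  simp only [Complex.I_sq, show Complex.I^4 = 1 by
    rw [show (4:ℕ)=2*2 from rfl, pow_mul, Complex.I_sq]; ring]
  ring

/-- Irrationality of `√2` in integer form. -/
theorem sqne (NZ sZ : ℤ) (hN : 1 ≤ NZ) : NZ^2 ≠ 2*sZ^2 := by
  intro h
  have hs0 : sZ ≠ 0 := by rintro rfl; nlinarith
  have hq0 : (0:ℚ) ≤ |(NZ:ℚ)| / |(sZ:ℚ)| := by positivity
  apply irrational_sqrt_two
  refine ⟨|(NZ:ℚ)| / |(sZ:ℚ)|, ?_⟩
  have hsQ : ((sZ:ℚ):ℝ) ≠ 0 := by exact_mod_cast Int.cast_ne_zero.mpr hs0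
  have h2 : ((|(NZ:ℚ)| / |(sZ:ℚ)| : ℚ) : ℝ)^2 = 2 := by
    push_cast
    rw [div_pow, _root_.sq_abs, _root_.sq_abs, div_eq_iff (by positivity)]
    exact_mod_cast h
  rw [show (2:ℝ) = ((|(NZ:ℚ)| / |(sZ:ℚ)| : ℚ) : ℝ)^2 from h2.symm,
    Real.sqrt_sq (by exact_mod_cast hq0)]

/-- For `c₁,…,c₄ ∈ ℤ[i]` not all zero, `det (M Mᴴ)` is a positive integer,
in particular at least 1. -/
theorem stmt6 (c : Fin 4 → ℂ) (hc : ∀ t, IsGaussian (c t)) (hne : c ≠ 0) :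
    ∃ n : ℤ, 0 < n ∧ 1 ≤ n ∧ (Mmat c * (Mmat c)ᴴ).det = (n : ℂ) := by
  choose a b hab using hc
  have hc' : c = fun t => (a t : ℂ) + (b t : ℂ) * Complex.I := funext hab
  set NZ : ℤ := a 0^2+b 0^2+a 1^2+b 1^2+a 2^2+b 2^2+a 3^2+b 3^2 with hNZ
  set sZ : ℤ := a 0*a 1 + a 1*b 0 - a 0*b 1 + b 0*b 1 + a 2*a 3 + a 3*b 2 - a 2*b 3 + b 2*b 3 with hsZ
  -- `NZ ≥ 1` since some `c t ≠ 0`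
  have hN1 : 1 ≤ NZ := by
    obtain ⟨t, ht⟩ := Function.ne_iff.mp hne
    have hab' : ¬(a t = 0 ∧ b t = 0) := by
      rintro ⟨h1, h2⟩
      apply ht
      simp [hab t, h1, h2]
    have h1 : 1 ≤ a t^2 + b t^2 := by
      rcases not_and_or.mp hab' with h | h
      · have := Int.one_le_abs h
        nlinarith [sq_nonneg (b t), _root_.sq_abs (a t)]
      · have := Int.one_le_abs h
        nlinarith [sq_nonneg (a t), _root_.sq_abs (b t)]
    fin_cases t <;> simp only [Fin.zero_eta, Fin.mk_one, Fin.reduceFinMk, Fin.isValue] at h1 <;>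
      nlinarith [sq_nonneg (a 0), sq_nonneg (b 0), sq_nonneg (a 1), sq_nonneg (b 1),
        sq_nonneg (a 2), sq_nonneg (b 2), sq_nonneg (a 3), sq_nonneg (b 3)]
  have hkey : NZ^2 ≠ 2*sZ^2 := sqne NZ sZ hN1
  refine ⟨(NZ^2 - 2*sZ^2)^2, ?_, ?_, ?_⟩
  · have h0 : NZ^2 - 2*sZ^2 ≠ 0 := sub_ne_zero.mpr hkey
    positivity
  · have h0 : NZ^2 - 2*sZ^2 ≠ 0 := sub_ne_zero.mpr hkey
    have := Int.one_le_abs h0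
    rw [← _root_.sq_abs]; exact one_le_pow₀ this
  · rw [hc', Mmat_mul_conjTranspose a b ((NZ : ℤ) : ℂ) ((sZ : ℤ) : ℂ) (by rw [hNZ])
      (by rw [hsZ]), detblock]
    push_cast
    ring
end

section
/- With M = M(c₁,c₂,c₃,c₄) as in the quaternionic representation, write α = Σ_{t=1}^4 |cₜ|² and k = −i c₁c₂* + c₂c₁* − i c₃c₄* + c₄c₃*. Then M M^H is block diagonal with both diagonal 2×2 blocks equal to the matrix with diagonal entries α and off-diagonal entries k*, k, where k satisfies k* = i k; consequently det(M M^H) = (α² − |k|²)². -/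
open Complex Matrix

/-- `α = Σ|cₜ|²`. -/
noncomputable def alphaOf (c : Fin 4 → ℂ) : ℝ := ∑ t, Complex.normSq (c t)

/-- `k = −ic₁c₂* + c₂c₁* − ic₃c₄* + c₄c₃*`. -/
noncomputable def kOf (c : Fin 4 → ℂ) : ℂ :=
  -Complex.I * c 0 * starRingEnd ℂ (c 1) + c 1 * starRingEnd ℂ (c 0)
    - Complex.I * c 2 * starRingEnd ℂ (c 3) + c 3 * starRingEnd ℂ (c 2)

set_option maxHeartbeats 1000000 in
/-- `M Mᴴ` is block diagonal with both 2×2 blocks `[[α, k*],[k, α]]`, where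
`k* = ik`; consequently `det (M Mᴴ) = (α² − |k|²)²`. -/
theorem stmt7 (c : Fin 4 → ℂ) :
    starRingEnd ℂ (kOf c) = Complex.I * kOf c ∧
    Mmat c * (Mmat c)ᴴ =
      !![(alphaOf c : ℂ), starRingEnd ℂ (kOf c), 0, 0;
         kOf c, (alphaOf c : ℂ), 0, 0;
         0, 0, (alphaOf c : ℂ), starRingEnd ℂ (kOf c);
         0, 0, kOf c, (alphaOf c : ℂ)] ∧
    (Mmat c * (Mmat c)ᴴ).det = (((alphaOf c ^ 2 - ‖kOf c‖ ^ 2) ^ 2 : ℝ) : ℂ) := by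
  have hk : starRingEnd ℂ (kOf c) = Complex.I * kOf c := by
    simp only [kOf, map_add, map_sub, _root_.map_mul, map_neg, Complex.conj_conj,
      Complex.conj_I]
    ring_nf
    simp only [Complex.I_sq]
    ring
  have hm : Mmat c * (Mmat c)ᴴ =
      !![(alphaOf c : ℂ), starRingEnd ℂ (kOf c), 0, 0;
         kOf c, (alphaOf c : ℂ), 0, 0;
         0, 0, (alphaOf c : ℂ), starRingEnd ℂ (kOf c);
         0, 0, kOf c, (alphaOf c : ℂ)] := by
    ext i j
    fin_cases i <;> fin_cases j <;>
      simp [Matrix.mul_apply, Fin.sum_univ_four, Matrix.conjTranspose_apply, Mmat, alphaOf, kOf,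
        Matrix.vecHead, Matrix.vecTail] <;>
      · ring_nf
        try simp only [Complex.I_sq, ← Complex.mul_conj]
        try push_cast
        try ring_nf
  refine ⟨hk, hm, ?_⟩
  rw [hm]
  simp [Matrix.det_succ_row_zero, Fin.sum_univ_succ, Fin.succAbove, hk]
  rw [show ((‖kOf c‖ : ℝ) : ℂ) ^ 2 = kOf c * starRingEnd ℂ (kOf c) from by
    rw [← Complex.ofReal_pow, Complex.sq_norm, Complex.mul_conj], hk]
  ring
end

section
/- The set 𝓘_𝓛 = {(c₁ + ξc₂) + j(c₃ + ξc₄) ∈ 𝓛 : c₁+c₂+c₃+c₄ ∈ (1+i)ℤ[i]} is a two-sided ideal of index two in the Lipschitz-type ring 𝓛 = ℤ[i] ⊕ ξℤ[i] ⊕ jℤ[i] ⊕ jξℤ[i]. -/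
open Quaternion Complex

/-- `z` lies in the prime ideal `(1+i)ℤ[i]` of the Gaussian integers. -/
def InIdeal (z : ℂ) : Prop := ∃ a b : ℤ, z = (1 + Complex.I) * (a + b * Complex.I)

/-- The Lipschitz-type ring `𝓛 = ℤ[i] ⊕ ξℤ[i] ⊕ jℤ[i] ⊕ jξℤ[i]`. -/
noncomputable def LipSet : Set (Quaternion ℝ) :=
  {q | ∃ a₁ b₁ a₂ b₂ a₃ b₃ a₄ b₄ : ℤ,
    q = Gq a₁ b₁ + xiQ * Gq a₂ b₂ + jj * Gq a₃ b₃ + jj * xiQ * Gq a₄ b₄}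

/-- `𝓘_𝓛 = {(c₁ + ξc₂) + j(c₃ + ξc₄) ∈ 𝓛 : c₁+c₂+c₃+c₄ ∈ (1+i)ℤ[i]}`. -/
noncomputable def IdealSet : Set (Quaternion ℝ) :=
  {q | ∃ a₁ b₁ a₂ b₂ a₃ b₃ a₄ b₄ : ℤ,
    q = Gq a₁ b₁ + xiQ * Gq a₂ b₂ + jj * Gq a₃ b₃ + jj * xiQ * Gq a₄ b₄ ∧
    InIdeal ((a₁ + b₁ * Complex.I) + (a₂ + b₂ * Complex.I) +
      (a₃ + b₃ * Complex.I) + (a₄ + b₄ * Complex.I))}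


noncomputable def sR : ℝ := Real.sqrt 2 / 2

lemma hsR : sR * sR = 1/2 := by
  unfold sR
  rw [div_mul_div_comm, Real.mul_self_sqrt (by norm_num)]
  norm_num

lemma xiQ_eq : xiQ = ⟨sR, sR, 0, 0⟩ := by
  unfold xiQ toQ sR
  have h : (Real.pi : ℂ) * Complex.I / 4 = ((Real.pi/4 : ℝ) : ℂ) * Complex.I := by push_cast; ring
  rw [h, Complex.exp_mul_I]
  ext <;> simp [← Complex.ofReal_div, Complex.cos_ofReal_re, Complex.cos_ofReal_im,
    Complex.sin_ofReal_re, Complex.sin_ofReal_im, Real.cos_pi_div_four, Real.sin_pi_div_four]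

noncomputable def EL (a1 b1 a2 b2 a3 b3 a4 b4 : ℤ) : Quaternion ℝ :=
  Gq a1 b1 + xiQ * Gq a2 b2 + jj * Gq a3 b3 + jj * xiQ * Gq a4 b4

lemma ELcoord (a1 b1 a2 b2 a3 b3 a4 b4 : ℤ) :
    EL a1 b1 a2 b2 a3 b3 a4 b4 =
    ⟨(a1:ℝ) + sR*((a2:ℝ)-(b2:ℝ)), (b1:ℝ) + sR*((a2:ℝ)+(b2:ℝ)),
     (a3:ℝ) + sR*((a4:ℝ)-(b4:ℝ)), -(b3:ℝ) - sR*((a4:ℝ)+(b4:ℝ))⟩ := by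
  unfold EL Gq jj
  rw [xiQ_eq]
  ext <;> (repeat erw [QuaternionAlgebra.mk_mul_mk]) <;> (repeat erw [QuaternionAlgebra.mk_add_mk]) <;> simp <;> ring

lemma Emul (a1 b1 a2 b2 a3 b3 a4 b4 c1 d1 c2 d2 c3 d3 c4 d4 : ℤ) :
    EL a1 b1 a2 b2 a3 b3 a4 b4 * EL c1 d1 c2 d2 c3 d3 c4 d4 =
    EL ((-1)*b4*d4 + (-1)*a4*c4 + (-1)*b3*d3 + (-1)*a3*c3 + (-1)*b2*c2 + (-1)*a2*d2 + (-1)*b1*d1 + a1*c1)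
      (b4*c4 + (-1)*a4*d4 + b3*c3 + (-1)*a3*d3 + (-1)*b2*d2 + a2*c2 + b1*c1 + a1*d1)
      (b4*c3 + (-1)*a4*d3 + (-1)*b3*d4 + (-1)*a3*c4 + (-1)*b2*d1 + a2*c1 + (-1)*b1*d2 + a1*c2)
      (b4*d3 + a4*c3 + b3*c4 + (-1)*a3*d4 + b2*c1 + a2*d1 + b1*c2 + a1*d2)
      ((-1)*b4*c2 + (-1)*a4*d2 + (-1)*b3*d1 + a3*c1 + b2*d4 + a2*c4 + b1*d3 + a1*c3)
      ((-1)*b4*d2 + a4*c2 + b3*c1 + a3*d1 + (-1)*b2*c4 + a2*d4 + (-1)*b1*c3 + a1*d3)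
      ((-1)*b4*d1 + a4*c1 + (-1)*b3*d2 + a3*c2 + (-1)*b2*c3 + a2*d3 + b1*d4 + a1*c4)
      (b4*c1 + a4*d1 + b3*c2 + a3*d2 + (-1)*b2*d3 + (-1)*a2*c3 + (-1)*b1*c4 + a1*d4) := by
  rw [ELcoord, ELcoord, ELcoord]
  ext <;> (repeat erw [QuaternionAlgebra.mk_mul_mk]) <;> simp only [] <;> push_cast <;>
    [linear_combination ((-2:ℝ)*(b4:ℝ)*(d4:ℝ) + (-2:ℝ)*(a4:ℝ)*(c4:ℝ) + (-2:ℝ)*(b2:ℝ)*(c2:ℝ) + (-2:ℝ)*(a2:ℝ)*(d2:ℝ)) * hsR;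
     linear_combination ((2:ℝ)*(b4:ℝ)*(c4:ℝ) + (-2:ℝ)*(a4:ℝ)*(d4:ℝ) + (-2:ℝ)*(b2:ℝ)*(d2:ℝ) + (2:ℝ)*(a2:ℝ)*(c2:ℝ)) * hsR;
     linear_combination ((-2:ℝ)*(b4:ℝ)*(c2:ℝ) + (-2:ℝ)*(a4:ℝ)*(d2:ℝ) + (2:ℝ)*(b2:ℝ)*(d4:ℝ) + (2:ℝ)*(a2:ℝ)*(c4:ℝ)) * hsR;
     linear_combination ((2:ℝ)*(b4:ℝ)*(d2:ℝ) + (-2:ℝ)*(a4:ℝ)*(c2:ℝ) + (2:ℝ)*(b2:ℝ)*(c4:ℝ) + (-2:ℝ)*(a2:ℝ)*(d4:ℝ)) * hsR]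

lemma Esum_mul (a1 b1 a2 b2 a3 b3 a4 b4 c1 d1 c2 d2 c3 d3 c4 d4 : ℤ) :
    ((-1)*b4*d4 + (-1)*a4*c4 + (-1)*b3*d3 + (-1)*a3*c3 + (-1)*b2*c2 + (-1)*a2*d2 + (-1)*b1*d1 + a1*c1) + (b4*c4 + (-1)*a4*d4 + b3*c3 + (-1)*a3*d3 + (-1)*b2*d2 + a2*c2 + b1*c1 + a1*d1) + (b4*c3 + (-1)*a4*d3 + (-1)*b3*d4 + (-1)*a3*c4 + (-1)*b2*d1 + a2*c1 + (-1)*b1*d2 + a1*c2) + (b4*d3 + a4*c3 + b3*c4 + (-1)*a3*d4 + b2*c1 + a2*d1 + b1*c2 + a1*d2) + ((-1)*b4*c2 + (-1)*a4*d2 + (-1)*b3*d1 + a3*c1 + b2*d4 + a2*c4 + b1*d3 + a1*c3) + ((-1)*b4*d2 + a4*c2 + b3*c1 + a3*d1 + (-1)*b2*c4 + a2*d4 + (-1)*b1*c3 + a1*d3) + ((-1)*b4*d1 + a4*c1 + (-1)*b3*d2 + a3*c2 + (-1)*b2*c3 + a2*d3 + b1*d4 + a1*c4) + (b4*c1 +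 a4*d1 + b3*c2 + a3*d2 + (-1)*b2*d3 + (-1)*a2*c3 + (-1)*b1*c4 + a1*d4) =
    (a1+b1+a2+b2+a3+b3+a4+b4) * (c1+d1+c2+d2+c3+d3+c4+d4) + 2 * ((-1)*b4*d4 + (-1)*b4*d2 + (-1)*b4*c2 + (-1)*b4*d1 + (-1)*a4*d4 + (-1)*a4*c4 + (-1)*a4*d3 + (-1)*a4*d2 + (-1)*b3*d4 + (-1)*b3*d3 + (-1)*b3*d2 + (-1)*b3*d1 + (-1)*a3*d4 + (-1)*a3*c4 + (-1)*a3*d3 + (-1)*a3*c3 + (-1)*b2*c4 + (-1)*b2*d3 + (-1)*b2*c3 + (-1)*b2*d2 + (-1)*b2*c2 + (-1)*b2*d1 + (-1)*a2*c3 + (-1)*a2*d2 + (-1)*b1*c4 + (-1)*b1*c3 + (-1)*b1*d2 + (-1)*b1*d1) := by ring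

lemma inIdeal_int (x y : ℤ) : InIdeal ((x:ℂ) + (y:ℂ)*Complex.I) ↔ Even (x+y) := by
  constructor
  · rintro ⟨a, b, h⟩
    rw [Complex.ext_iff] at h
    obtain ⟨h1, h2⟩ := h
    simp [Complex.add_re, Complex.add_im, Complex.mul_re, Complex.mul_im] at h1 h2
    have hx : x = a - b := by exact_mod_cast h1
    have hy : y = b + a := by exact_mod_cast h2
    rw [Int.even_iff]; omega
  · rintro ⟨t, ht⟩
    refine ⟨t, y - t, ?_⟩
    have hx : x = t + t - y := by omega
    subst hx
    push_cast
    linear_combination ((t:ℂ) - (y:ℂ)) * Complex.I_sq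

lemma mem_Lip_E (a1 b1 a2 b2 a3 b3 a4 b4 : ℤ) : EL a1 b1 a2 b2 a3 b3 a4 b4 ∈ LipSet :=
  ⟨a1, b1, a2, b2, a3, b3, a4, b4, rfl⟩

lemma mem_Lip_iff (q : Quaternion ℝ) :
    q ∈ LipSet ↔ ∃ a1 b1 a2 b2 a3 b3 a4 b4 : ℤ, q = EL a1 b1 a2 b2 a3 b3 a4 b4 := Iff.rfl

lemma mem_Ideal_iff (q : Quaternion ℝ) :
    q ∈ IdealSet ↔ ∃ a1 b1 a2 b2 a3 b3 a4 b4 : ℤ, q = EL a1 b1 a2 b2 a3 b3 a4 b4 ∧ Even (a1+b1+a2+b2+a3+b3+a4+b4) := by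
  constructor
  · rintro ⟨a1, b1, a2, b2, a3, b3, a4, b4, h, hid⟩
    refine ⟨a1, b1, a2, b2, a3, b3, a4, b4, h, ?_⟩
    have hc : ((a1:ℂ) + b1*Complex.I) + (a2 + b2*Complex.I) + (a3 + b3*Complex.I) + (a4 + b4*Complex.I)
        = ((a1+a2+a3+a4 : ℤ):ℂ) + ((b1+b2+b3+b4 : ℤ):ℂ)*Complex.I := by push_cast; ring
    rw [hc, inIdeal_int] at hid
    rw [Int.even_iff] at hid ⊢
    omega
  · rintro ⟨a1, b1, a2, b2, a3, b3, a4, b4, h, hev⟩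
    refine ⟨a1, b1, a2, b2, a3, b3, a4, b4, h, ?_⟩
    have hc : ((a1:ℂ) + b1*Complex.I) + (a2 + b2*Complex.I) + (a3 + b3*Complex.I) + (a4 + b4*Complex.I)
        = ((a1+a2+a3+a4 : ℤ):ℂ) + ((b1+b2+b3+b4 : ℤ):ℂ)*Complex.I := by push_cast; ring
    rw [hc, inIdeal_int]
    rw [Int.even_iff] at hev ⊢
    omega

lemma indep (p q : ℤ) (h : (p:ℝ) + sR * (q:ℝ) = 0) : p = 0 ∧ q = 0 := by
  by_cases hq : q = 0
  · subst hq
    norm_num at h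
    exact ⟨by exact_mod_cast h, rfl⟩
  · exfalso
    have hq' : (q:ℝ) ≠ 0 := Int.cast_ne_zero.2 hq
    refine irrational_sqrt_two ⟨(-2*p : ℚ)/(q:ℚ), ?_⟩
    have hsr2 : Real.sqrt 2 = 2 * sR := by unfold sR; ring
    push_cast
    rw [hsr2, div_eq_iff hq']
    linear_combination (-2 : ℝ) * h

lemma indep2 (p q p' q' : ℤ) (h : (p:ℝ) + sR*(q:ℝ) = (p':ℝ) + sR*(q':ℝ)) :
    p = p' ∧ q = q' := by
  have h0 : ((p - p' : ℤ):ℝ) + sR * ((q - q' : ℤ):ℝ) = 0 := by push_cast; linear_combination h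
  obtain ⟨h1, h2⟩ := indep _ _ h0
  constructor <;> omega

lemma E_inj {a1 b1 a2 b2 a3 b3 a4 b4 c1 d1 c2 d2 c3 d3 c4 d4 : ℤ}
    (h : EL a1 b1 a2 b2 a3 b3 a4 b4 = EL c1 d1 c2 d2 c3 d3 c4 d4) :
    a1 = c1 ∧ b1 = d1 ∧ a2 = c2 ∧ b2 = d2 ∧ a3 = c3 ∧ b3 = d3 ∧ a4 = c4 ∧ b4 = d4 := by
  rw [ELcoord, ELcoord] at h
  replace h := QuaternionAlgebra.mk.inj h
  obtain ⟨h1, h2, h3, h4⟩ := h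
  obtain ⟨k1, k2⟩ := indep2 a1 (a2 - b2) c1 (c2 - d2) (by push_cast; linear_combination h1)
  obtain ⟨k3, k4⟩ := indep2 b1 (a2 + b2) d1 (c2 + d2) (by push_cast; linear_combination h2)
  obtain ⟨k5, k6⟩ := indep2 a3 (a4 - b4) c3 (c4 - d4) (by push_cast; linear_combination h3)
  obtain ⟨k7, k8⟩ := indep2 (-b3) (-(a4 + b4)) (-d3) (-(c4 + d4)) (by push_cast; linear_combination h4)
  refine ⟨?_, ?_, ?_, ?_, ?_, ?_, ?_, ?_⟩ <;> omega

lemma mem_Ideal_E_iff (a1 b1 a2 b2 a3 b3 a4 b4 : ℤ) :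
    EL a1 b1 a2 b2 a3 b3 a4 b4 ∈ IdealSet ↔ Even (a1+b1+a2+b2+a3+b3+a4+b4) := by
  rw [mem_Ideal_iff]
  constructor
  · rintro ⟨c1, d1, c2, d2, c3, d3, c4, d4, h, hev⟩
    obtain ⟨e1, e2, e3, e4, e5, e6, e7, e8⟩ := E_inj h
    rw [Int.even_iff] at hev ⊢
    omega
  · intro h
    exact ⟨a1, b1, a2, b2, a3, b3, a4, b4, rfl, h⟩

lemma Eadd (a1 b1 a2 b2 a3 b3 a4 b4 c1 d1 c2 d2 c3 d3 c4 d4 : ℤ) :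
    EL a1 b1 a2 b2 a3 b3 a4 b4 + EL c1 d1 c2 d2 c3 d3 c4 d4 =
    EL (a1+c1) (b1+d1) (a2+c2) (b2+d2) (a3+c3) (b3+d3) (a4+c4) (b4+d4) := by
  rw [ELcoord, ELcoord, ELcoord]
  ext <;> (repeat erw [QuaternionAlgebra.mk_add_mk]) <;> simp <;> ring

lemma Eneg (a1 b1 a2 b2 a3 b3 a4 b4 : ℤ) :
    -EL a1 b1 a2 b2 a3 b3 a4 b4 = EL (-a1) (-b1) (-a2) (-b2) (-a3) (-b3) (-a4) (-b4) := by
  rw [ELcoord, ELcoord]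
  ext <;> (repeat erw [QuaternionAlgebra.neg_mk]) <;> simp <;> ring

lemma Ezero : EL 0 0 0 0 0 0 0 0 = 0 := by
  rw [ELcoord]
  ext <;> simp

lemma EL_mul_ideal_right (a1 b1 a2 b2 a3 b3 a4 b4 c1 d1 c2 d2 c3 d3 c4 d4 : ℤ) (hev : Even (c1+d1+c2+d2+c3+d3+c4+d4)) :
    EL a1 b1 a2 b2 a3 b3 a4 b4 * EL c1 d1 c2 d2 c3 d3 c4 d4 ∈ IdealSet := by
  obtain ⟨t, ht⟩ := hev
  rw [Emul]
  refine (mem_Ideal_E_iff _ _ _ _ _ _ _ _).2 ⟨(a1+b1+a2+b2+a3+b3+a4+b4)*t + ((-1)*b4*d4 + (-1)*b4*d2 + (-1)*b4*c2 + (-1)*b4*d1 + (-1)*a4*d4 + (-1)*a4*c4 + (-1)*a4*d3 + (-1)*a4*d2 + (-1)*b3*d4 + (-1)*b3*d3 + (-1)*b3*d2 + (-1)*b3*d1 + (-1)*a3*d4 + (-1)*a3*c4 + (-1)*a3*d3 + (-1)*a3*c3 + (-1)*b2*c4 + (-1)*b2*d3 + (-1)*b2*c3 + (-1)*b2*d2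 + (-1)*b2*c2 + (-1)*b2*d1 + (-1)*a2*c3 + (-1)*a2*d2 + (-1)*b1*c4 + (-1)*b1*c3 + (-1)*b1*d2 + (-1)*b1*d1), ?_⟩
  linear_combination (a1+b1+a2+b2+a3+b3+a4+b4) * ht

lemma EL_mul_ideal_left (a1 b1 a2 b2 a3 b3 a4 b4 c1 d1 c2 d2 c3 d3 c4 d4 : ℤ) (hev : Even (a1+b1+a2+b2+a3+b3+a4+b4)) :
    EL a1 b1 a2 b2 a3 b3 a4 b4 * EL c1 d1 c2 d2 c3 d3 c4 d4 ∈ IdealSet := by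
  obtain ⟨t, ht⟩ := hev
  rw [Emul]
  refine (mem_Ideal_E_iff _ _ _ _ _ _ _ _).2 ⟨t*(c1+d1+c2+d2+c3+d3+c4+d4) + ((-1)*b4*d4 + (-1)*b4*d2 + (-1)*b4*c2 + (-1)*b4*d1 + (-1)*a4*d4 + (-1)*a4*c4 + (-1)*a4*d3 + (-1)*a4*d2 + (-1)*b3*d4 + (-1)*b3*d3 + (-1)*b3*d2 + (-1)*b3*d1 + (-1)*a3*d4 + (-1)*a3*c4 + (-1)*a3*d3 + (-1)*a3*c3 + (-1)*b2*c4 + (-1)*b2*d3 + (-1)*b2*c3 + (-1)*b2*d2 + (-1)*b2*c2 + (-1)*b2*d1 + (-1)*a2*c3 + (-1)*a2*d2 + (-1)*b1*c4 + (-1)*b1*c3 + (-1)*b1*d2 + (-1)*b1*d1), ?_⟩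
  linear_combination (c1+d1+c2+d2+c3+d3+c4+d4) * ht

noncomputable def LSg : AddSubgroup (Quaternion ℝ) where
  carrier := LipSet
  zero_mem' := ⟨0, 0, 0, 0, 0, 0, 0, 0, Ezero.symm⟩
  add_mem' := by
    intro x y hx hy
    obtain ⟨a1, b1, a2, b2, a3, b3, a4, b4, rfl⟩ := (mem_Lip_iff x).1 hx
    obtain ⟨c1, d1, c2, d2, c3, d3, c4, d4, rfl⟩ := (mem_Lip_iff y).1 hy
    have h : (EL a1 b1 a2 b2 a3 b3 a4 b4 + EL c1 d1 c2 d2 c3 d3 c4 d4) ∈ LipSet := by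
      rw [Eadd]; exact mem_Lip_E _ _ _ _ _ _ _ _
    exact h
  neg_mem' := by
    intro x hx
    obtain ⟨a1, b1, a2, b2, a3, b3, a4, b4, rfl⟩ := (mem_Lip_iff x).1 hx
    have h : -EL a1 b1 a2 b2 a3 b3 a4 b4 ∈ LipSet := by
      rw [Eneg]; exact mem_Lip_E _ _ _ _ _ _ _ _
    exact h

noncomputable def ISg : AddSubgroup (Quaternion ℝ) where
  carrier := IdealSet
  zero_mem' := (mem_Ideal_iff 0).2 ⟨0, 0, 0, 0, 0, 0, 0, 0, Ezero.symm, ⟨0, rfl⟩⟩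
  add_mem' := by
    intro x y hx hy
    obtain ⟨a1, b1, a2, b2, a3, b3, a4, b4, rfl, ha⟩ := (mem_Ideal_iff x).1 hx
    obtain ⟨c1, d1, c2, d2, c3, d3, c4, d4, rfl, hc⟩ := (mem_Ideal_iff y).1 hy
    rw [Eadd]
    refine (mem_Ideal_E_iff _ _ _ _ _ _ _ _).2 ?_
    obtain ⟨u, hu⟩ := ha
    obtain ⟨v, hv⟩ := hc
    exact ⟨u + v, by omega⟩
  neg_mem' := by
    intro x hx
    obtain ⟨a1, b1, a2, b2, a3, b3, a4, b4, rfl, ha⟩ := (mem_Ideal_iff x).1 hx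
    rw [Eneg]
    refine (mem_Ideal_E_iff _ _ _ _ _ _ _ _).2 ?_
    obtain ⟨u, hu⟩ := ha
    exact ⟨-u, by omega⟩
/-- `𝓘_𝓛` is a two-sided ideal of index two in the Lipschitz-type ring `𝓛`. -/
theorem stmt8 : ∃ (LS IS : AddSubgroup (Quaternion ℝ)),
    (LS : Set (Quaternion ℝ)) = LipSet ∧ (IS : Set (Quaternion ℝ)) = IdealSet ∧
    IS ≤ LS ∧
    (∀ x ∈ LipSet, ∀ y ∈ IdealSet, x * y ∈ IdealSet ∧ y * x ∈ IdealSet) ∧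
    (IS.addSubgroupOf LS).index = 2 := by
  refine ⟨LSg, ISg, rfl, rfl, ?_, ?_, ?_⟩
  · intro q hq
    obtain ⟨a1, b1, a2, b2, a3, b3, a4, b4, rfl, _⟩ := (mem_Ideal_iff q).1 hq
    exact mem_Lip_E _ _ _ _ _ _ _ _
  · intro x hx y hy
    obtain ⟨a1, b1, a2, b2, a3, b3, a4, b4, rfl⟩ := (mem_Lip_iff x).1 hx
    obtain ⟨c1, d1, c2, d2, c3, d3, c4, d4, rfl, hc⟩ := (mem_Ideal_iff y).1 hy
    exact ⟨EL_mul_ideal_right _ _ _ _ _ _ _ _ _ _ _ _ _ _ _ _ hc,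
           EL_mul_ideal_left _ _ _ _ _ _ _ _ _ _ _ _ _ _ _ _ hc⟩
  · rw [AddSubgroup.index_eq_two_iff]
    have h1mem : EL 1 0 0 0 0 0 0 0 ∈ LSg := mem_Lip_E 1 0 0 0 0 0 0 0
    refine ⟨⟨EL 1 0 0 0 0 0 0 0, h1mem⟩, ?_⟩
    rintro ⟨q, hq⟩
    have hq' : q ∈ LipSet := hq
    obtain ⟨a1, b1, a2, b2, a3, b3, a4, b4, rfl⟩ := (mem_Lip_iff q).1 hq'
    have e1 : ((⟨EL a1 b1 a2 b2 a3 b3 a4 b4, hq⟩ + ⟨EL 1 0 0 0 0 0 0 0, h1mem⟩ : LSg)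
        ∈ ISg.addSubgroupOf LSg) ↔ Even (a1+b1+a2+b2+a3+b3+a4+b4 + 1) := by
      rw [AddSubgroup.mem_addSubgroupOf]
      show (EL a1 b1 a2 b2 a3 b3 a4 b4 + EL 1 0 0 0 0 0 0 0) ∈ IdealSet
        ↔ Even (a1+b1+a2+b2+a3+b3+a4+b4 + 1)
      rw [Eadd, mem_Ideal_E_iff]
      constructor <;> (intro h; rw [Int.even_iff] at h ⊢; omega)
    have e2 : ((⟨EL a1 b1 a2 b2 a3 b3 a4 b4, hq⟩ : LSg) ∈ ISg.addSubgroupOf LSg)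
        ↔ Even (a1+b1+a2+b2+a3+b3+a4+b4) := by
      rw [AddSubgroup.mem_addSubgroupOf]
      show EL a1 b1 a2 b2 a3 b3 a4 b4 ∈ IdealSet ↔ _
      exact mem_Ideal_E_iff a1 b1 a2 b2 a3 b3 a4 b4
    rw [e1, e2]
    by_cases he : Even (a1+b1+a2+b2+a3+b3+a4+b4)
    · exact Or.inr ⟨he, by rw [Int.even_iff] at he ⊢; omega⟩
    · refine Or.inl ⟨?_, he⟩
      rw [Int.even_iff] at he ⊢; omega
end

section
/- For any nonzero matrix M = M(c₁,c₂,c₃,c₄) with c₁,…,c₄ ∈ ℤ[i] satisfying c₁+c₂+c₃+c₄ ∈ (1+i)ℤ[i], the determinant det(M M^H) is at least 4. -/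
open Complex Matrix ComplexOrder

lemma det_aux (a0 b0 a1 b1 a2 b2 a3 b3 : ℤ) :
    (Mmat ![(a0:ℂ)+b0*Complex.I, (a1:ℂ)+b1*Complex.I, (a2:ℂ)+b2*Complex.I,
      (a3:ℂ)+b3*Complex.I]).det =
    (((a0^2+b0^2+a1^2+b1^2+a2^2+b2^2+a3^2+b3^2)^2
      - 2*(a0*a1+b0*b1+b0*a1-a0*b1+a2*a3+b2*b3+b2*a3-a2*b3)^2 : ℤ) : ℂ) := by
  rw [Mmat]
  simp only [Matrix.cons_val_zero, Matrix.cons_val_one, Matrix.head_cons, Matrix.head_fin_const,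
    Matrix.cons_val_fin_one, Matrix.cons_val', Matrix.cons_val_two, Matrix.cons_val_three,
    Matrix.tail_cons, map_add, _root_.map_mul, Complex.conj_I, map_intCast]
  rw [Matrix.det_succ_row_zero]
  simp [Fin.sum_univ_succ, Matrix.det_fin_three, Matrix.submatrix_apply, Fin.succAbove,
    Fin.ext_iff,
    show Fin.castSucc (2:Fin 3) = (2:Fin 4) from rfl, show Fin.succ (2:Fin 3) = (3:Fin 4) from rfl,
    show Fin.castSucc (1:Fin 3) = (1:Fin 4) from rfl, show Fin.succ (1:Fin 3) = (2:Fin 4) from rfl,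
    show Fin.castSucc (0:Fin 3) = (0:Fin 4) from rfl, show Fin.succ (0:Fin 3) = (1:Fin 4) from rfl,
    show Fin.castSucc (1:Fin 2) = (1:Fin 3) from rfl, show Fin.succ (1:Fin 2) = (2:Fin 3) from rfl,
    show Fin.castSucc (0:Fin 2) = (0:Fin 3) from rfl, show Fin.succ (0:Fin 2) = (1:Fin 3) from rfl]
  push_cast
  linear_combination ((-1)*(b3:ℂ)^4 + (b3:ℂ)^4*Complex.I^2 + (-1)*(b3:ℂ)^4*Complex.I^4 + (-2)*(a3:ℂ)^2*(b3:ℂ)^2 + 2*(a3:ℂ)^2*(b3:ℂ)^2*Complex.I^2 + (-1)*(a3:ℂ)^4 + 4*(b2:ℂ)^2*(a3:ℂ)*(b3:ℂ) + (-4)*(b2:ℂ)^2*(a3:ℂ)*(b3:ℂ)*Complex.I^2 + (-1)*(b2:ℂ)^4 + (b2:ℂ)^4*Complex.I^2 + (-4)*(a2:ℂ)*(b2:ℂ)*(b3:ℂ)^2 + 4*(a2:ℂ)*(b2:ℂ)*(b3:ℂ)^2*Complex.I^2 + 4*(a2:ℂ)*(b2:ℂ)*(a3:ℂ)^2 + (-4)*(a2:ℂ)^2*(a3:ℂ)*(b3:ℂ)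 + (-2)*(a2:ℂ)^2*(b2:ℂ)^2 + (-2)*(b1:ℂ)^2*(b3:ℂ)^2 + 2*(b1:ℂ)^2*(b3:ℂ)^2*Complex.I^2 + (-2)*(b1:ℂ)^2*(b3:ℂ)^2*Complex.I^4 + (-2)*(b1:ℂ)^2*(a3:ℂ)^2 + 2*(b1:ℂ)^2*(a3:ℂ)^2*Complex.I^2 + (-2)*(b1:ℂ)^2*(b2:ℂ)^2 + 2*(b1:ℂ)^2*(b2:ℂ)^2*Complex.I^2 + (-1)*(b1:ℂ)^2*(b2:ℂ)^2*Complex.I^4 + (-2)*(b1:ℂ)^2*(a2:ℂ)^2 + (b1:ℂ)^2*(a2:ℂ)^2*Complex.I^2 + (-1)*(b1:ℂ)^4 + (b1:ℂ)^4*Complex.I^2 + (-1)*(b1:ℂ)^4*Complex.I^4 + (-2)*(a1:ℂ)^2*(b3:ℂ)^2 + 2*(a1:ℂ)^2*(b3:ℂ)^2*Complex.I^2 + (-2)*(a1:ℂ)^2*(a3:ℂ)^2 + (-2)*(a1:ℂ)^2*(b2:ℂ)^2 + (a1:ℂ)^2*(b2:ℂ)^2*Complex.I^2 + (-1)*(a1:ℂ)^2*(a2:ℂ)^2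 + (-2)*(a1:ℂ)^2*(b1:ℂ)^2 + 2*(a1:ℂ)^2*(b1:ℂ)^2*Complex.I^2 + (-1)*(a1:ℂ)^4 + 4*(b0:ℂ)*(b1:ℂ)*(b2:ℂ)*(b3:ℂ) + (-4)*(b0:ℂ)*(b1:ℂ)*(b2:ℂ)*(b3:ℂ)*Complex.I^2 + 2*(b0:ℂ)*(b1:ℂ)*(b2:ℂ)*(b3:ℂ)*Complex.I^4 + 4*(b0:ℂ)*(b1:ℂ)*(b2:ℂ)*(a3:ℂ) + (-4)*(b0:ℂ)*(b1:ℂ)*(b2:ℂ)*(a3:ℂ)*Complex.I^2 + (-4)*(b0:ℂ)*(b1:ℂ)*(a2:ℂ)*(b3:ℂ) + 4*(b0:ℂ)*(b1:ℂ)*(a2:ℂ)*(b3:ℂ)*Complex.I^2 + 4*(b0:ℂ)*(b1:ℂ)*(a2:ℂ)*(a3:ℂ) + (-2)*(b0:ℂ)*(b1:ℂ)*(a2:ℂ)*(a3:ℂ)*Complex.I^2 + 4*(b0:ℂ)*(a1:ℂ)*(b2:ℂ)*(b3:ℂ) + (-4)*(b0:ℂ)*(a1:ℂ)*(b2:ℂ)*(b3:ℂ)*Complex.I^2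 + 4*(b0:ℂ)*(a1:ℂ)*(b2:ℂ)*(a3:ℂ) + (-2)*(b0:ℂ)*(a1:ℂ)*(b2:ℂ)*(a3:ℂ)*Complex.I^2 + (-4)*(b0:ℂ)*(a1:ℂ)*(a2:ℂ)*(b3:ℂ) + 2*(b0:ℂ)*(a1:ℂ)*(a2:ℂ)*(b3:ℂ)*Complex.I^2 + 4*(b0:ℂ)*(a1:ℂ)*(a2:ℂ)*(a3:ℂ) + (-2)*(b0:ℂ)^2*(b3:ℂ)^2 + 2*(b0:ℂ)^2*(b3:ℂ)^2*Complex.I^2 + (-1)*(b0:ℂ)^2*(b3:ℂ)^2*Complex.I^4 + (-2)*(b0:ℂ)^2*(a3:ℂ)^2 + (b0:ℂ)^2*(a3:ℂ)^2*Complex.I^2 + (-2)*(b0:ℂ)^2*(b2:ℂ)^2 + 2*(b0:ℂ)^2*(b2:ℂ)^2*Complex.I^2 + (-2)*(b0:ℂ)^2*(a2:ℂ)^2 + 4*(b0:ℂ)^2*(a1:ℂ)*(b1:ℂ) + (-4)*(b0:ℂ)^2*(a1:ℂ)*(b1:ℂ)*Complex.I^2 + (-1)*(b0:ℂ)^4 +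 (b0:ℂ)^4*Complex.I^2 + (-4)*(a0:ℂ)*(b1:ℂ)*(b2:ℂ)*(b3:ℂ) + 4*(a0:ℂ)*(b1:ℂ)*(b2:ℂ)*(b3:ℂ)*Complex.I^2 + (-4)*(a0:ℂ)*(b1:ℂ)*(b2:ℂ)*(a3:ℂ) + 2*(a0:ℂ)*(b1:ℂ)*(b2:ℂ)*(a3:ℂ)*Complex.I^2 + 4*(a0:ℂ)*(b1:ℂ)*(a2:ℂ)*(b3:ℂ) + (-2)*(a0:ℂ)*(b1:ℂ)*(a2:ℂ)*(b3:ℂ)*Complex.I^2 + (-4)*(a0:ℂ)*(b1:ℂ)*(a2:ℂ)*(a3:ℂ) + 4*(a0:ℂ)*(a1:ℂ)*(b2:ℂ)*(b3:ℂ) + (-2)*(a0:ℂ)*(a1:ℂ)*(b2:ℂ)*(b3:ℂ)*Complex.I^2 + 4*(a0:ℂ)*(a1:ℂ)*(b2:ℂ)*(a3:ℂ) + (-4)*(a0:ℂ)*(a1:ℂ)*(a2:ℂ)*(b3:ℂ) + 2*(a0:ℂ)*(a1:ℂ)*(a2:ℂ)*(a3:ℂ) + (-4)*(a0:ℂ)*(b0:ℂ)*(b1:ℂ)^2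 + 4*(a0:ℂ)*(b0:ℂ)*(b1:ℂ)^2*Complex.I^2 + 4*(a0:ℂ)*(b0:ℂ)*(a1:ℂ)^2 + (-2)*(a0:ℂ)^2*(b3:ℂ)^2 + (a0:ℂ)^2*(b3:ℂ)^2*Complex.I^2 + (-1)*(a0:ℂ)^2*(a3:ℂ)^2 + (-2)*(a0:ℂ)^2*(b2:ℂ)^2 + (-4)*(a0:ℂ)^2*(a1:ℂ)*(b1:ℂ) + (-2)*(a0:ℂ)^2*(b0:ℂ)^2) * Complex.I_sq

lemma sq_eq_two_mul_sq (A P : ℤ) (h : A^2 = 2*P^2) : A = 0 := by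
  by_contra hA
  have hP : P ≠ 0 := by
    rintro rfl
    exact hA (by nlinarith)
  have hq : (((A:ℚ)/P))^2 = 2 := by
    field_simp
    exact_mod_cast h.trans (mul_comm _ _)
  have hq' : ((((A:ℚ)/P) : ℚ) : ℝ)^2 = 2 := by exact_mod_cast hq
  have h2 : ((|(A:ℚ)/P| : ℚ) : ℝ) = Real.sqrt 2 := by
    rw [← hq', Real.sqrt_sq_eq_abs]
    norm_cast
  exact irrational_sqrt_two ⟨_, h2⟩

lemma my_le_of_sq_le_sq (u v : ℤ) (h : v^2 ≤ u^2) (hu : 0 ≤ u) : v ≤ u := by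
  nlinarith [h, hu]

set_option maxHeartbeats 1000000 in
/-- For a nonzero `M = M(c₁,c₂,c₃,c₄)` with Gaussian-integer coefficients
satisfying `c₁+c₂+c₃+c₄ ∈ (1+i)ℤ[i]`, one has `det (M Mᴴ) ≥ 4`. -/
theorem stmt9 (c : Fin 4 → ℂ) (hc : ∀ t, IsGaussian (c t))
    (hsum : InIdeal (c 0 + c 1 + c 2 + c 3)) (hne : Mmat c ≠ 0) :
    (4 : ℂ) ≤ (Mmat c * (Mmat c)ᴴ).det := by
  obtain ⟨a0, b0, h0⟩ := hc 0
  obtain ⟨a1, b1, h1⟩ := hc 1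
  obtain ⟨a2, b2, h2⟩ := hc 2
  obtain ⟨a3, b3, h3⟩ := hc 3
  obtain ⟨x, y, hs⟩ := hsum
  have hcc : c = ![(a0:ℂ)+b0*Complex.I, (a1:ℂ)+b1*Complex.I, (a2:ℂ)+b2*Complex.I,
      (a3:ℂ)+b3*Complex.I] := by
    funext t
    fin_cases t
    · exact h0
    · exact h1
    · exact h2
    · exact h3
  set n : ℤ := (a0^2+b0^2+a1^2+b1^2+a2^2+b2^2+a3^2+b3^2)^2
      - 2*(a0*a1+b0*b1+b0*a1-a0*b1+a2*a3+b2*b3+b2*a3-a2*b3)^2 with hn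
  have key : (Mmat c).det = ((n : ℤ) : ℂ) := by
    rw [hcc, det_aux, ← hn]
  have hdet : (Mmat c * (Mmat c)ᴴ).det = ((n*n : ℤ) : ℂ) := by
    have hstar : star (((n:ℤ)):ℂ) = ((n:ℤ):ℂ) := map_intCast (starRingEnd ℂ) n
    rw [Matrix.det_mul, Matrix.det_conjTranspose, key, hstar]
    push_cast
    ring
  -- parity of alpha
  have hsmod : a0 + a1 + a2 + a3 + (b0 + b1 + b2 + b3) = 2*x := by
    have hre : ((a0 + a1 + a2 + a3 : ℤ) : ℝ) = ((x - y : ℤ) : ℝ) := by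
      have := congrArg Complex.re hs
      simp [h0, h1, h2, h3] at this
      push_cast
      linarith [this]
    have him : ((b0 + b1 + b2 + b3 : ℤ) : ℝ) = ((x + y : ℤ) : ℝ) := by
      have := congrArg Complex.im hs
      simp [h0, h1, h2, h3] at this
      push_cast
      linarith [this]
    have hre' : a0 + a1 + a2 + a3 = x - y := by exact_mod_cast hre
    have him' : b0 + b1 + b2 + b3 = x + y := by exact_mod_cast him
    omega
  have hparity : ∀ m : ℤ, m^2 % 2 = m % 2 := by
    intro m
    rcases Int.even_or_odd m with ⟨k, hk⟩ | ⟨k, hk⟩ <;> subst hk <;> ring_nf <;> omega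
  have halpha_even : (a0^2+b0^2+a1^2+b1^2+a2^2+b2^2+a3^2+b3^2) % 2 = 0 := by
    have e0 := hparity a0; have e1 := hparity a1; have e2 := hparity a2; have e3 := hparity a3
    have f0 := hparity b0; have f1 := hparity b1; have f2 := hparity b2; have f3 := hparity b3
    omega
  have hn_even : n % 2 = 0 := by
    have := hparity (a0^2+b0^2+a1^2+b1^2+a2^2+b2^2+a3^2+b3^2)
    omega
  -- nonnegativity
  have h1x : 0 ≤ (a0^2+b0^2+a1^2+b1^2)^2 - 2*(a0*a1+b0*b1+b0*a1-a0*b1)^2 := by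
    have hid : (a0^2+b0^2+a1^2+b1^2)^2 - 2*(a0*a1+b0*b1+b0*a1-a0*b1)^2
        = (a0^2+b0^2-a1^2-b1^2)^2 + 2*((a0*a1+b0*b1) - (b0*a1-a0*b1))^2 := by ring
    rw [hid]; positivity
  have h2x : 0 ≤ (a2^2+b2^2+a3^2+b3^2)^2 - 2*(a2*a3+b2*b3+b2*a3-a2*b3)^2 := by
    have hid : (a2^2+b2^2+a3^2+b3^2)^2 - 2*(a2*a3+b2*b3+b2*a3-a2*b3)^2
        = (a2^2+b2^2-a3^2-b3^2)^2 + 2*((a2*a3+b2*b3) - (b2*a3-a2*b3))^2 := by ring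
    rw [hid]; positivity
  have hA : 0 ≤ a0^2+b0^2+a1^2+b1^2 := by positivity
  have hB : 0 ≤ a2^2+b2^2+a3^2+b3^2 := by positivity
  have hprod : (2*((a0*a1+b0*b1+b0*a1-a0*b1)*(a2*a3+b2*b3+b2*a3-a2*b3)))^2
      ≤ ((a0^2+b0^2+a1^2+b1^2)*(a2^2+b2^2+a3^2+b3^2))^2 := by
    have hid : ((a0^2+b0^2+a1^2+b1^2)*(a2^2+b2^2+a3^2+b3^2))^2
        - (2*((a0*a1+b0*b1+b0*a1-a0*b1)*(a2*a3+b2*b3+b2*a3-a2*b3)))^2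
        = (a2^2+b2^2+a3^2+b3^2)^2 * ((a0^2+b0^2+a1^2+b1^2)^2 - 2*(a0*a1+b0*b1+b0*a1-a0*b1)^2)
          + 2*(a0*a1+b0*b1+b0*a1-a0*b1)^2
            * ((a2^2+b2^2+a3^2+b3^2)^2 - 2*(a2*a3+b2*b3+b2*a3-a2*b3)^2) := by ring
    linarith [hid, mul_nonneg (sq_nonneg (a2^2+b2^2+a3^2+b3^2)) h1x,
      mul_nonneg (mul_nonneg (by norm_num : (0:ℤ) ≤ 2) (sq_nonneg (a0*a1+b0*b1+b0*a1-a0*b1))) h2x]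
  have hcross : 2*((a0*a1+b0*b1+b0*a1-a0*b1)*(a2*a3+b2*b3+b2*a3-a2*b3))
      ≤ (a0^2+b0^2+a1^2+b1^2)*(a2^2+b2^2+a3^2+b3^2) :=
    my_le_of_sq_le_sq _ _ hprod (mul_nonneg hA hB)
  have hnonneg : 0 ≤ n := by
    have hid : n = ((a0^2+b0^2+a1^2+b1^2)^2 - 2*(a0*a1+b0*b1+b0*a1-a0*b1)^2)
        + ((a2^2+b2^2+a3^2+b3^2)^2 - 2*(a2*a3+b2*b3+b2*a3-a2*b3)^2)
        + 2*((a0^2+b0^2+a1^2+b1^2)*(a2^2+b2^2+a3^2+b3^2)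
            - 2*((a0*a1+b0*b1+b0*a1-a0*b1)*(a2*a3+b2*b3+b2*a3-a2*b3))) := by rw [hn]; ring
    rw [hid]
    have := hcross
    linarith [h1x, h2x]
  have hne' : ¬ (a0 = 0 ∧ b0 = 0 ∧ a1 = 0 ∧ b1 = 0 ∧ a2 = 0 ∧ b2 = 0 ∧ a3 = 0 ∧ b3 = 0) := by
    rintro ⟨rfl, rfl, rfl, rfl, rfl, rfl, rfl, rfl⟩
    apply hne
    rw [hcc]
    ext i j
    fin_cases i <;> fin_cases j <;> simp [Mmat, Matrix.vecHead, Matrix.vecTail]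
  have hsqz : ∀ m : ℤ, m^2 = 0 → m = 0 := by
    intro m hm
    exact (pow_eq_zero_iff two_ne_zero).mp hm
  have hnz : n ≠ 0 := by
    intro h0'
    have hAeq : (a0^2+b0^2+a1^2+b1^2+a2^2+b2^2+a3^2+b3^2)^2
        = 2*(a0*a1+b0*b1+b0*a1-a0*b1+a2*a3+b2*b3+b2*a3-a2*b3)^2 := by
      rw [hn] at h0'; linarith
    have hz := sq_eq_two_mul_sq _ _ hAeq
    refine hne' ⟨hsqz _ ?_, hsqz _ ?_, hsqz _ ?_, hsqz _ ?_, hsqz _ ?_, hsqz _ ?_, hsqz _ ?_,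
      hsqz _ ?_⟩ <;>
      linarith [sq_nonneg a0, sq_nonneg b0, sq_nonneg a1, sq_nonneg b1, sq_nonneg a2,
        sq_nonneg b2, sq_nonneg a3, sq_nonneg b3]
  clear hsmod halpha_even hprod hcross h1x h2x hA hB hne' hsqz
  have hge2 : 2 ≤ n := by
    rcases hnonneg.lt_or_eq with h | h
    · have h2 : (2:ℤ) ∣ n := Int.dvd_of_emod_eq_zero hn_even
      omega
    · exact absurd h.symm hnz
  have h4 : (4:ℤ) ≤ n*n := by
    have := mul_le_mul hge2 hge2 (by norm_num) (by linarith : (0:ℤ) ≤ n)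
    linarith
  rw [hdet]
  rw [Complex.le_def]
  constructor
  · simp only [Complex.intCast_re]
    calc (4:ℂ).re = ((4:ℤ):ℝ) := by norm_num
      _ ≤ ((n*n:ℤ):ℝ) := by exact_mod_cast h4
  · simp
end

section
/- Let A and B be commuting n×n complex matrices such that A, B, A^H, B^H all commute, let h ∈ ℂ^{2n} be a row vector, and define M(A,B) as the 2n×2n block matrix with blocks [[A, B], [−B^H, A^H]]. Then the vectors hM(A,0) and hM(0,B) in ℂ^{2n}, viewed as vectors in ℝ^{4n}, are orthogonal with respect to the real inner product (i.e. the real part of the Hermitian inner product of hM(A,0) and hM(0,B) is zero). -/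
open Matrix Complex

/-- If `A, B, Aᴴ, Bᴴ` all commute pairwise and `h ∈ ℂ^{2n}`, then the vectors
`h·M(A,0)` and `h·M(0,B)` (with `M(A,B) = [[A, B],[−Bᴴ, Aᴴ]]`) are orthogonal
for the real inner product on `ℂ^{2n} ≅ ℝ^{4n}`. -/
theorem stmt16 (n : ℕ) (A B : Matrix (Fin n) (Fin n) ℂ)
    (h1 : A * B = B * A) (h2 : A * Aᴴ = Aᴴ * A) (h3 : A * Bᴴ = Bᴴ * A)
    (h4 : B * Aᴴ = Aᴴ * B) (h5 : B * Bᴴ = Bᴴ * B) (h6 : Aᴴ * Bᴴ = Bᴴ * Aᴴ)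
    (h : Fin n ⊕ Fin n → ℂ) :
    ((h ᵥ* Matrix.fromBlocks A 0 (-(0 : Matrix (Fin n) (Fin n) ℂ)ᴴ) Aᴴ) ⬝ᵥ
      star (h ᵥ* Matrix.fromBlocks 0 B (-Bᴴ) 0)).re = 0 := by
  set M1 := Matrix.fromBlocks A 0 (-(0 : Matrix (Fin n) (Fin n) ℂ)ᴴ) Aᴴ with hM1
  set M2 := Matrix.fromBlocks (0 : Matrix (Fin n) (Fin n) ℂ) B (-Bᴴ) 0 with hM2
  have key : (M1 * M2ᴴ)ᴴ = -(M1 * M2ᴴ) := by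
    simp [hM1, hM2, Matrix.fromBlocks_multiply, Matrix.fromBlocks_conjTranspose,
      Matrix.fromBlocks_neg, Matrix.conjTranspose_mul, Matrix.mul_neg]
    exact ⟨h1.symm, h6.symm⟩
  have e1 : (h ᵥ* M1) ⬝ᵥ star (h ᵥ* M2) = (h ᵥ* (M1 * M2ᴴ)) ⬝ᵥ star h := by
    rw [Matrix.star_vecMul, Matrix.dotProduct_mulVec, Matrix.vecMul_vecMul]
  set z := (h ᵥ* (M1 * M2ᴴ)) ⬝ᵥ star h with hz
  have e2 : star z = -z := by
    calc star z = star (star h) ⬝ᵥ star (h ᵥ* (M1 * M2ᴴ)) := by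
          exact (Matrix.star_dotProduct_star (star h) (h ᵥ* (M1 * M2ᴴ))).symm
      _ = h ⬝ᵥ ((M1 * M2ᴴ)ᴴ *ᵥ star h) := by rw [star_star, Matrix.star_vecMul]
      _ = (h ᵥ* (M1 * M2ᴴ)ᴴ) ⬝ᵥ star h := by rw [Matrix.dotProduct_mulVec]
      _ = -z := by rw [key, Matrix.vecMul_neg, neg_dotProduct]
  rw [e1]
  have := congrArg Complex.re e2
  simp only [Complex.neg_re, RCLike.star_def, Complex.conj_re] at this
  linarith
end
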